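/- Let U be a set of M ≥ 2 distinct unit vectors in ℝⁿ, all satisfying v · e_n > 0, where e_n = (0, …, 0, 1). Then there is an ordering {u_1, …, u_M} of the vectors in U and a collection of pairwise disjoint nonempty sectors S_1, …, S_{M−1} ⊆ ℝⁿ such that for every l = 2, …, M and every i = 1, …, M−1: S_i ⊆ Γ_{u_l} if i < l, and S_i ∩ Γ_{u_l} = ∅ if i ≥ l. -/
import Mathlib


open scoped RealInnerProductSpace

/-- A sector in `ℝⁿ`: a nonempty set of the form
`{x : x·v_j > 0 for 1 ≤ j ≤ s, x·v_j < 0 for s < j ≤ r}` for some distinct unit vectors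
`v_1, …, v_r` and some `0 ≤ s ≤ r`. -/
def IsSector {n : ℕ} (S : Set (EuclideanSpace ℝ (Fin n))) : Prop :=
  S.Nonempty ∧
    ∃ (r s : ℕ) (v : Fin r → EuclideanSpace ℝ (Fin n)), s ≤ r ∧
      Function.Injective v ∧ (∀ i, ‖v i‖ = 1) ∧
      S = {x | (∀ i : Fin r, (i : ℕ) < s → 0 < ⟪x, v i⟫) ∧
               (∀ i : Fin r, s ≤ (i : ℕ) → ⟪x, v i⟫ < 0)}

private lemma mod_aux {M k c : ℕ} (hk : k < M) (hc : c ≤ M) :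
    (k + c) % M = if k + c < M then k + c else k + c - M := by
  split_ifs with h
  · exact Nat.mod_eq_of_lt h
  · rw [Nat.mod_eq_sub_mod (le_of_not_gt h)]
    exact Nat.mod_eq_of_lt (by omega)

/-- A generic functional vanishing on `e` but not on any member of a finite family of
nonzero vectors orthogonal to `e`. -/
private lemma exists_generic {n : ℕ} (e : EuclideanSpace ℝ (Fin n)) {ι : Type} [Finite ι]
    (d : ι → EuclideanSpace ℝ (Fin n)) (hD : ∀ i, d i ≠ 0 ∧ ⟪e, d i⟫ = 0) :
    ∃ a : EuclideanSpace ℝ (Fin n), ⟪e, a⟫ = 0 ∧ ∀ i, ⟪a, d i⟫ ≠ 0 := by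
  set W : Submodule ℝ (EuclideanSpace ℝ (Fin n)) := (ℝ ∙ e)ᗮ with hW
  set P : ι → Subspace ℝ W := fun i =>
    LinearMap.ker (((innerSL ℝ (d i)).toLinearMap).comp W.subtype) with hP
  have hne : ⋃ i, (P i : Set W) ≠ Set.univ := by
    intro h
    obtain ⟨i, hi⟩ := Subspace.exists_eq_top_of_iUnion_eq_univ h
    obtain ⟨hd0, hde⟩ := hD i
    have hdW : d i ∈ W := Submodule.mem_orthogonal_singleton_iff_inner_right.mpr hde
    have hmem : (⟨d i, hdW⟩ : W) ∈ P i := hi ▸ Submodule.mem_top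
    have hdd : ⟪d i, d i⟫ = 0 := hmem
    exact hd0 (inner_self_eq_zero.mp hdd)
  obtain ⟨w, hw⟩ := Set.ne_univ_iff_exists_notMem _ |>.mp hne
  simp only [Set.mem_iUnion, not_exists] at hw
  refine ⟨(w : EuclideanSpace ℝ (Fin n)),
    Submodule.mem_orthogonal_singleton_iff_inner_right.mp w.2, fun i hcon => hw i ?_⟩
  show w ∈ (P i : Set W)
  simp only [hP, SetLike.mem_coe, LinearMap.mem_ker, LinearMap.comp_apply,
    Submodule.subtype_apply, ContinuousLinearMap.coe_coe, innerSL_apply_apply]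
  rw [real_inner_comm]
  exact hcon

set_option maxHeartbeats 1000000 in
/-- The geometric lemma: if `U` is a set of `M ≥ 2` distinct unit vectors in `ℝⁿ`, all with
positive last coordinate (`v·e_n > 0`), then there is an ordering `u_0, …, u_{M-1}` of `U` and
pairwise disjoint nonempty sectors `S_0, …, S_{M-2}` such that (in 0-based indexing) for every
`l ≥ 1` and every `i`: `S_i ⊆ Γ_{u_l}` if `i < l`, and `S_i ∩ Γ_{u_l} = ∅` if `i ≥ l`,
where `Γ_v = {x : x·v > 0}`. -/
theorem exists_ordering_and_sectors (n M : ℕ) (hn : 1 ≤ n) (hM : 2 ≤ M)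
    (U : Finset (EuclideanSpace ℝ (Fin n))) (hcard : U.card = M)
    (hunit : ∀ v ∈ U, ‖v‖ = 1)
    (hpos : ∀ v ∈ U, 0 < ⟪v, EuclideanSpace.single (⟨n - 1, by omega⟩ : Fin n) (1 : ℝ)⟫) :
    ∃ u : Fin M → EuclideanSpace ℝ (Fin n), Function.Injective u ∧ (∀ l, u l ∈ U) ∧
      ∃ S : Fin (M - 1) → Set (EuclideanSpace ℝ (Fin n)),
        (∀ i, IsSector (S i)) ∧
        (∀ i j, i ≠ j → S i ∩ S j = ∅) ∧
        (∀ (l : Fin M) (i : Fin (M - 1)), 1 ≤ (l : ℕ) →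
          ((i : ℕ) < (l : ℕ) → S i ⊆ {x | 0 < ⟪x, u l⟫}) ∧
          ((l : ℕ) ≤ (i : ℕ) → S i ∩ {x | 0 < ⟪x, u l⟫} = ∅)) := by
  set e : EuclideanSpace ℝ (Fin n) :=
    EuclideanSpace.single (⟨n - 1, by omega⟩ : Fin n) (1 : ℝ) with he
  have hpos' : ∀ v ∈ U, 0 < ⟪e, v⟫ := fun v hv => by
    rw [real_inner_comm]; exact hpos v hv
  set p : EuclideanSpace ℝ (Fin n) → EuclideanSpace ℝ (Fin n) :=
    fun v => (⟪e, v⟫)⁻¹ • v with hp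
  have hpe : ∀ v ∈ U, ⟪e, p v⟫ = 1 := by
    intro v hv
    rw [hp]
    simp only [real_inner_smul_right]
    exact inv_mul_cancel₀ (ne_of_gt (hpos' v hv))
  have hpinj : ∀ v ∈ U, ∀ w ∈ U, p v = p w → v = w := by
    intro v hv w hw h
    have hcv := hpos' v hv
    have hcw := hpos' w hw
    set c : ℝ := ⟪e, v⟫ * (⟪e, w⟫)⁻¹ with hc
    have hveq : v = c • w := by
      calc v = ⟪e, v⟫ • ((⟪e, v⟫)⁻¹ • v) := by
              rw [smul_smul, mul_inv_cancel₀ (ne_of_gt hcv), one_smul]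
        _ = ⟪e, v⟫ • ((⟪e, w⟫)⁻¹ • w) := by rw [show (⟪e, v⟫)⁻¹ • v = (⟪e, w⟫)⁻¹ • w from h]
        _ = c • w := (smul_smul _ _ _)
    have hcpos : 0 < c := mul_pos hcv (inv_pos.mpr hcw)
    have h1 : ‖v‖ = |c| * ‖w‖ := by
      rw [hveq, norm_smul, Real.norm_eq_abs]
    rw [hunit v hv, hunit w hw, mul_one, abs_of_pos hcpos] at h1
    rw [hveq, ← h1, one_smul]
  -- choose a generic functional a
  let ι := {q : (↥U) × (↥U) //
    (q.1 : EuclideanSpace ℝ (Fin n)) ≠ (q.2 : EuclideanSpace ℝ (Fin n))}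
  let d : ι → EuclideanSpace ℝ (Fin n) := fun q => p (q.1.1 : _) - p (q.1.2 : _)
  have hDprop : ∀ q : ι, d q ≠ 0 ∧ ⟪e, d q⟫ = 0 := by
    intro ⟨⟨v, w⟩, hq⟩
    constructor
    · intro h0
      exact hq (hpinj _ v.2 _ w.2 (sub_eq_zero.mp h0))
    · rw [inner_sub_right, hpe _ v.2, hpe _ w.2, sub_self]
  obtain ⟨a, hae, ha⟩ := exists_generic e d hDprop
  have ha' : ∀ v ∈ U, ∀ w ∈ U, v ≠ w → ⟪a, p v⟫ ≠ ⟪a, p w⟫ := by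
    intro v hv w hw hne heq
    refine ha ⟨(⟨v, hv⟩, ⟨w, hw⟩), hne⟩ ?_
    show ⟪a, p v - p w⟫ = 0
    rw [inner_sub_right, heq, sub_self]
  -- enumerate and sort
  let u0 : Fin M → EuclideanSpace ℝ (Fin n) :=
    fun i => ((U.equivFinOfCardEq hcard).symm i : EuclideanSpace ℝ (Fin n))
  have hu0inj : Function.Injective u0 := fun i j h =>
    (U.equivFinOfCardEq hcard).symm.injective (Subtype.coe_injective h)
  have hu0mem : ∀ i, u0 i ∈ U := fun i => ((U.equivFinOfCardEq hcard).symm i).2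
  let κ : Fin M → ℝ := fun i => ⟪a, p (u0 i)⟫
  have hκinj : Function.Injective κ := by
    intro i j h
    by_contra hij
    exact ha' _ (hu0mem i) _ (hu0mem j) (fun hu => hij (hu0inj hu)) h
  let σ := Tuple.sort κ
  let u : Fin M → EuclideanSpace ℝ (Fin n) := u0 ∘ σ
  have huinj : Function.Injective u := hu0inj.comp σ.injective
  have humem : ∀ l, u l ∈ U := fun l => hu0mem (σ l)
  let kk : Fin M → ℝ := κ ∘ σ
  have hmono : StrictMono kk :=
    (Tuple.monotone_sort κ).strictMono_of_injective (hκinj.comp σ.injective)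
  have hg : ∀ j : Fin M, 0 < ⟪e, u j⟫ := fun j => hpos' _ (humem j)
  have hinner : ∀ (c : ℝ) (j : Fin M), ⟪a - c • e, u j⟫ = ⟪e, u j⟫ * (kk j - c) := by
    intro c j
    have hgj : ⟪e, u j⟫ ≠ 0 := ne_of_gt (hg j)
    have hk : kk j = (⟪e, u j⟫)⁻¹ * ⟪a, u j⟫ := real_inner_smul_right a (u j) _
    rw [inner_sub_left, real_inner_smul_left, hk, mul_sub, ← mul_assoc,
      mul_inv_cancel₀ hgj, one_mul]
    ring
  -- the sectors
  set S : Fin (M - 1) → Set (EuclideanSpace ℝ (Fin n)) := fun i =>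
    {x | ∀ j : Fin M, ((j : ℕ) ≤ (i : ℕ) → ⟪x, u j⟫ < 0) ∧
        ((i : ℕ) < (j : ℕ) → 0 < ⟪x, u j⟫)} with hS
  refine ⟨u, huinj, humem, S, ?_, ?_, ?_⟩
  · -- each S i is a sector
    intro i
    have hiM : (i : ℕ) < M - 1 := i.isLt
    have hi1 : (i : ℕ) + 1 < M := by omega
    have hi0 : (i : ℕ) < M := by omega
    -- nonempty
    set iv : Fin M := ⟨i, hi0⟩ with hiv
    set iv1 : Fin M := ⟨(i : ℕ) + 1, hi1⟩ with hiv1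
    have hlt : kk iv < kk iv1 := hmono (by simp [Fin.lt_def, hiv, hiv1])
    set ci : ℝ := (kk iv + kk iv1) / 2 with hci
    have hxi : (a - ci • e) ∈ S i := by
      intro j
      constructor
      · intro hji
        rw [hinner]
        apply mul_neg_of_pos_of_neg (hg j)
        have hle : kk j ≤ kk iv := hmono.monotone (by simpa [Fin.le_def, hiv] using hji)
        simp only [hci]; linarith
      · intro hij
        rw [hinner]
        apply mul_pos (hg j)
        have hle : kk iv1 ≤ kk j := hmono.monotone (by simp [Fin.le_def, hiv1]; omega)
        simp only [hci]; linarith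
    -- the rotation
    set ρ : Fin M → Fin M := fun k => ⟨((k : ℕ) + (i : ℕ) + 1) % M,
      Nat.mod_lt _ (by omega)⟩ with hρ
    have hρval : ∀ k : Fin M, (ρ k : ℕ) =
        if (k : ℕ) + (i : ℕ) + 1 < M then (k : ℕ) + (i : ℕ) + 1
        else (k : ℕ) + (i : ℕ) + 1 - M := by
      intro k
      show ((k : ℕ) + (i : ℕ) + 1) % M = _
      have := mod_aux (M := M) (k := (k : ℕ)) (c := (i : ℕ) + 1) k.isLt (by omega)
      rw [← Nat.add_assoc] at this
      rw [this]
    have hρinj : Function.Injective ρ := by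
      intro k k' h
      have h' := congrArg Fin.val h
      rw [hρval, hρval] at h'
      have hk := k.isLt
      have hk' := k'.isLt
      apply Fin.ext
      split_ifs at h' <;> omega
    have hρsurj : Function.Surjective ρ := Finite.injective_iff_surjective.mp hρinj
    have hiff1 : ∀ k : Fin M, ((k : ℕ) < M - 1 - (i : ℕ) ↔ (i : ℕ) < (ρ k : ℕ)) := by
      intro k
      rw [hρval]
      have hk := k.isLt
      split_ifs <;> omega
    have hiff2 : ∀ k : Fin M, (M - 1 - (i : ℕ) ≤ (k : ℕ) ↔ (ρ k : ℕ) ≤ (i : ℕ)) := by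
      intro k
      rw [hρval]
      have hk := k.isLt
      split_ifs <;> omega
    refine ⟨⟨a - ci • e, hxi⟩, M, M - 1 - (i : ℕ), fun k => u (ρ k), by omega,
      huinj.comp hρinj, fun k => hunit _ (humem (ρ k)), ?_⟩
    ext x
    simp only [hS, Set.mem_setOf_eq]
    constructor
    · intro h
      exact ⟨fun k hk => (h (ρ k)).2 ((hiff1 k).mp hk),
        fun k hk => (h (ρ k)).1 ((hiff2 k).mp hk)⟩
    · intro h j
      obtain ⟨k, rfl⟩ := hρsurj j
      exact ⟨fun hji => h.2 k ((hiff2 k).mpr hji), fun hij => h.1 k ((hiff1 k).mpr hij)⟩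
  · -- disjointness
    have key : ∀ i j : Fin (M - 1), (i : ℕ) < (j : ℕ) → S i ∩ S j = ∅ := by
      intro i j hij
      apply Set.eq_empty_iff_forall_notMem.mpr
      rintro x ⟨hxi, hxj⟩
      have hi1 : (i : ℕ) + 1 < M := by have := i.isLt; omega
      set m : Fin M := ⟨(i : ℕ) + 1, hi1⟩ with hm
      have h1 := (hxi m).2 (by simp [hm])
      have h2 := (hxj m).1 (by simp [hm]; omega)
      linarith
    intro i j hij
    rcases lt_or_gt_of_ne (fun h => hij (Fin.ext h)) with h | h
    · exact key i j h
    · rw [Set.inter_comm]; exact key j i h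
  · -- the main property
    intro l i hl
    constructor
    · intro hil x hx
      exact (hx l).2 hil
    · intro hli
      apply Set.eq_empty_iff_forall_notMem.mpr
      rintro x ⟨hx1, hx2⟩
      have := (hx1 l).1 hli
      simp only [Set.mem_setOf_eq] at hx2
      linarith
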